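/- Let λ : [a,b] → ℝ be continuous. Then the limit as n → ∞ of the product ∏_{i=0}^{n-1} (1 - λ(a + i(b-a)/n) · (b-a)/n) equals exp(-∫_a^b λ(t) dt). -/

import Mathlib

open Filter Set

theorem prod_no_transition_tendsto_exp (a b : ℝ) (hab : a ≤ b)
    (lam : ℝ → ℝ) (hlam : ContinuousOn lam (Icc a b)) :
    Tendsto
      (fun n : ℕ =>
        ∏ i ∈ Finset.range n, (1 - lam (a + i * (b - a) / n) * ((b - a) / n)))
      atTop (nhds (Real.exp (-∫ t in a..b, lam t))) := by
  rcases eq_or_lt_of_le hab with rfl | hlt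
  · simpa using tendsto_const_nhds
  set L : ℝ := b - a with hLdef
  have hL : 0 < L := sub_pos.2 hlt
  obtain ⟨C, hC⟩ := isCompact_Icc.exists_bound_of_continuousOn hlam
  set M : ℝ := max C 0 with hMdef
  have hM0 : 0 ≤ M := le_max_right _ _
  have hMb : ∀ t ∈ Icc a b, |lam t| ≤ M := fun t ht => (hC t ht).trans (le_max_left _ _)
  set x : ℕ → ℕ → ℝ := fun n i => lam (a + i * L / n) * (L / n) with hxdef
  have hmem : ∀ n : ℕ, 0 < n → ∀ i : ℕ, i ≤ n → a + i * L / n ∈ Icc a b := by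
    intro n hn i hi
    have hn' : (0:ℝ) < n := by exact_mod_cast hn
    constructor
    · have h0 : 0 ≤ (i:ℝ) * L / n := div_nonneg (mul_nonneg (Nat.cast_nonneg i) hL.le) hn'.le
      linarith
    · have h1 : (i:ℝ) * L ≤ n * L := by
        apply mul_le_mul_of_nonneg_right _ hL.le
        exact_mod_cast hi
      have h2 : (i:ℝ) * L / n ≤ n * L / n := (div_le_div_iff_of_pos_right hn').2 h1
      rw [mul_div_cancel_left₀ L (ne_of_gt hn')] at h2
      simp only [hLdef] at h2 ⊢
      linarith
  have hxb : ∀ n : ℕ, 0 < n → ∀ i : ℕ, i < n → |x n i| ≤ M * L / n := by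
    intro n hn i hi
    have hn' : (0:ℝ) < n := by exact_mod_cast hn
    have h1 : |x n i| = |lam (a + i * L / n)| * (L / n) := by
      rw [hxdef, abs_mul, abs_of_nonneg (div_nonneg hL.le hn'.le)]
    rw [h1, show M * L / (n:ℝ) = M * (L / n) from mul_div_assoc M L n]
    exact mul_le_mul_of_nonneg_right (hMb _ (hmem n hn i hi.le)) (div_nonneg hL.le hn'.le)
  -- the Riemann sums
  set S : ℕ → ℝ := fun n => ∑ i ∈ Finset.range n, x n i with hSdef
  set I : ℝ := ∫ t in a..b, lam t with hIdef
  have hS : Tendsto S atTop (nhds I) := by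
    rw [Metric.tendsto_atTop]
    intro ε hε
    obtain ⟨δ, hδ0, hδ⟩ := Metric.uniformContinuousOn_iff.mp
      (isCompact_Icc.uniformContinuousOn_of_continuous hlam) (ε / (2 * L)) (div_pos hε (by linarith))
    refine ⟨⌈L / δ⌉₊ + 1, fun n hn => ?_⟩
    have hn0 : 0 < n := lt_of_lt_of_le (Nat.succ_pos _) hn
    have hn' : (0:ℝ) < n := by exact_mod_cast hn0
    have hmesh : L / n < δ := by
      have h1 : L / δ < n := by
        calc L / δ ≤ ⌈L / δ⌉₊ := Nat.le_ceil _
        _ < n := by exact_mod_cast hn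
      rw [div_lt_iff₀ hn']
      rw [div_lt_iff₀ hδ0] at h1
      linarith [mul_comm δ (n:ℝ)]
    set f : ℕ → ℝ := fun i => a + i * L / n with hfdef
    have hstep : ∀ i : ℕ, f (i + 1) - f i = L / n := by
      intro i
      simp only [hfdef]
      push_cast
      ring
    have hf0 : f 0 = a := by simp [hfdef]
    have hfn : f n = b := by
      show a + (n:ℝ) * L / n = b
      rw [mul_div_cancel_left₀ L (ne_of_gt hn'), hLdef]
      ring
    have hfx : ∀ i : ℕ, x n i = lam (f i) * (L / n) := fun i => rfl
    have hfmem : ∀ i : ℕ, i ≤ n → f i ∈ Icc a b := fun i hi => hmem n hn0 i hi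
    clear_value f
    have hfle : ∀ i : ℕ, f i ≤ f (i + 1) := fun i =>
      sub_nonneg.mp (by rw [hstep i]; exact (div_pos hL hn').le)
    have hsub : ∀ i : ℕ, i < n → Icc (f i) (f (i + 1)) ⊆ Icc a b := by
      intro i hi
      apply Icc_subset_Icc
      · exact (hfmem i hi.le).1
      · exact (hfmem (i + 1) hi).2
    have hint : ∀ i < n, IntervalIntegrable lam MeasureTheory.volume (f i) (f (i + 1)) := by
      intro i hi
      apply ContinuousOn.intervalIntegrable
      rw [uIcc_of_le (hfle i)]
      exact hlam.mono (hsub i hi)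
    have hsplit : ∑ i ∈ Finset.range n, ∫ t in f i..f (i + 1), lam t = I := by
      rw [intervalIntegral.sum_integral_adjacent_intervals hint]
      rw [hf0, hfn, hIdef]
    have hterm : ∀ i ∈ Finset.range n,
        |x n i - ∫ t in f i..f (i + 1), lam t| ≤ ε / (2 * L) * (L / n) := by
      intro i hi
      rw [Finset.mem_range] at hi
      have hconst : x n i = ∫ t in f i..f (i + 1), lam (f i) := by
        rw [intervalIntegral.integral_const, hstep i, smul_eq_mul, hfx i, mul_comm]
      have hdiff : x n i - ∫ t in f i..f (i + 1), lam t
          = ∫ t in f i..f (i + 1), (lam (f i) - lam t) := by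
        rw [hconst, ← intervalIntegral.integral_sub intervalIntegrable_const (hint i hi)]
      rw [hdiff]
      have hb : ∀ t ∈ Set.uIoc (f i) (f (i + 1)), ‖lam (f i) - lam t‖ ≤ ε / (2 * L) := by
        intro t ht
        rw [uIoc_of_le (hfle i)] at ht
        have htmem : t ∈ Icc a b := hsub i hi ⟨ht.1.le, ht.2⟩
        have hfimem : f i ∈ Icc a b := hfmem i hi.le
        have hdist : dist (f i) t < δ := by
          rw [Real.dist_eq, abs_of_nonpos (by linarith [ht.1] : f i - t ≤ 0)]
          have h1 := hstep i
          have h2 := ht.2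
          linarith [hmesh]
        exact le_of_lt (hδ (f i) hfimem t htmem hdist)
      calc ‖∫ t in f i..f (i + 1), (lam (f i) - lam t)‖
          ≤ ε / (2 * L) * |f (i + 1) - f i| :=
            intervalIntegral.norm_integral_le_of_norm_le_const hb
        _ = ε / (2 * L) * (L / n) := by
            rw [hstep i, abs_of_nonneg (div_nonneg hL.le hn'.le)]
    have hsum : dist (S n) I < ε := by
      rw [Real.dist_eq, ← hsplit, hSdef, ← Finset.sum_sub_distrib]
      calc |∑ i ∈ Finset.range n, (x n i - ∫ t in f i..f (i + 1), lam t)|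
          ≤ ∑ i ∈ Finset.range n, |x n i - ∫ t in f i..f (i + 1), lam t| :=
            Finset.abs_sum_le_sum_abs _ _
        _ ≤ ∑ _i ∈ Finset.range n, ε / (2 * L) * (L / n) := Finset.sum_le_sum hterm
        _ = n * (ε / (2 * L) * (L / n)) := by rw [Finset.sum_const, Finset.card_range]; ring
        _ = ε / 2 := by field_simp
        _ < ε := by linarith
    exact hsum
  -- log sums
  set T : ℕ → ℝ := fun n => ∑ i ∈ Finset.range n, Real.log (1 - x n i) with hTdef
  set N₀ : ℕ := ⌈2 * M * L⌉₊ + 1 with hN₀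
  have hsmall : ∀ n : ℕ, N₀ ≤ n → ∀ i : ℕ, i < n → |x n i| ≤ 1 / 2 := by
    intro n hn i hi
    have hn0 : 0 < n := lt_of_lt_of_le (Nat.succ_pos _) hn
    have hn' : (0:ℝ) < n := by exact_mod_cast hn0
    have h2 : 2 * M * L ≤ n := by
      calc 2 * M * L ≤ ⌈2 * M * L⌉₊ := Nat.le_ceil _
      _ ≤ n := by exact_mod_cast le_trans (Nat.le_succ _) hn
    calc |x n i| ≤ M * L / n := hxb n hn0 i hi
    _ ≤ 1 / 2 := by rw [div_le_div_iff₀ hn' two_pos]; linarith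
  have hTS : Tendsto (fun n => T n + S n) atTop (nhds 0) := by
    apply squeeze_zero_norm' (a := fun n : ℕ => 2 * M ^ 2 * L ^ 2 / n)
    · filter_upwards [eventually_ge_atTop N₀] with n hn
      have hn0 : 0 < n := lt_of_lt_of_le (Nat.succ_pos _) hn
      have hn' : (0:ℝ) < n := by exact_mod_cast hn0
      have hterm : ∀ i ∈ Finset.range n,
          |Real.log (1 - x n i) + x n i| ≤ 2 * (M * L / n) ^ 2 := by
        intro i hi
        rw [Finset.mem_range] at hi
        have h1 : |x n i| ≤ 1 / 2 := hsmall n hn i hi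
        have h2 : |x n i| < 1 := lt_of_le_of_lt h1 (by norm_num)
        have h3 := Real.abs_log_sub_add_sum_range_le h2 1
        simp only [Finset.range_one, Finset.sum_singleton, pow_one, Nat.cast_one] at h3
        have h4 : |x n i| ^ 2 / (1 - |x n i|) ≤ 2 * (M * L / n) ^ 2 := by
          have h5 : (1:ℝ) / 2 ≤ 1 - |x n i| := by linarith
          have h6 : |x n i| ^ 2 ≤ (M * L / n) ^ 2 := by
            apply sq_le_sq' <;> [skip; exact hxb n hn0 i hi]
            · have := hxb n hn0 i hi
              have := abs_nonneg (x n i)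
              nlinarith [neg_abs_le (x n i)]
          calc |x n i| ^ 2 / (1 - |x n i|) ≤ |x n i| ^ 2 / (1 / 2) :=
              div_le_div_of_nonneg_left (by positivity) (by norm_num) h5
          _ = 2 * |x n i| ^ 2 := by ring
          _ ≤ 2 * (M * L / n) ^ 2 := by linarith
        norm_num at h3
        calc |Real.log (1 - x n i) + x n i|
            = |x n i + Real.log (1 - x n i)| := by rw [add_comm]
          _ ≤ x n i ^ 2 / (1 - |x n i|) := h3
          _ ≤ 2 * (M * L / n) ^ 2 := by rw [← sq_abs (x n i)]; exact h4
      calc ‖T n + S n‖ = |∑ i ∈ Finset.range n, (Real.log (1 - x n i) + x n i)| := by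
            rw [Real.norm_eq_abs, hTdef, hSdef, ← Finset.sum_add_distrib]
        _ ≤ ∑ i ∈ Finset.range n, |Real.log (1 - x n i) + x n i| :=
            Finset.abs_sum_le_sum_abs _ _
        _ ≤ ∑ _i ∈ Finset.range n, 2 * (M * L / n) ^ 2 := Finset.sum_le_sum hterm
        _ = n * (2 * (M * L / n) ^ 2) := by rw [Finset.sum_const, Finset.card_range]; ring
        _ ≤ 2 * M ^ 2 * L ^ 2 / n := le_of_eq (by field_simp)
    · exact tendsto_const_div_atTop_nhds_zero_nat _
  have hT : Tendsto T atTop (nhds (-I)) := by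
    have := hTS.sub hS
    simp only [add_sub_cancel_right, zero_sub] at this
    exact this
  have hfinal : Tendsto (fun n => Real.exp (T n)) atTop (nhds (Real.exp (-I))) :=
    (Real.continuous_exp.tendsto _).comp hT
  apply hfinal.congr'
  filter_upwards [eventually_ge_atTop N₀] with n hn
  have hpos : ∀ i ∈ Finset.range n, 0 < 1 - x n i := by
    intro i hi
    rw [Finset.mem_range] at hi
    have := hsmall n hn i hi
    have := abs_le.1 this
    linarith [this.2]
  rw [hTdef, Real.exp_sum]
  exact Finset.prod_congr rfl fun i hi => Real.exp_log (hpos i hi)
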